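/- If x is a vertex of a GT-polytope GT(λ,μ) ⊂ X_n and q is a denominator appearing (in reduced form) among the entries of x with q > 1, then every s × s submatrix of the tiling matrix A_𝒫 of x has determinant divisible by q, where s is the number of free tiles. Consequently, since some s × s submatrix has nonzero determinant, q is bounded by the maximum absolute value of s × s subdeterminants of tiling matrices in X_n. -/

import Mathlib

/-- Valid index positions of a triangular array of size `n`. -/
abbrev IdxP (n i j : ℕ) : Prop := 1 ≤ i ∧ i ≤ j ∧ j ≤ n

/-- A Gelfand--Tsetlin pattern of size `n` (entries outside the triangle are ignored). -/
def IsGTPattern (n : ℕ) (x : ℕ → ℕ → ℝ) : Prop :=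
  (∀ i j, IdxP n i j → 0 ≤ x i j) ∧
  (∀ i j, 1 ≤ i → i ≤ j → j + 1 ≤ n → x i (j + 1) ≥ x i j ∧ x i j ≥ x (i + 1) (j + 1))

/-- Membership in the Gelfand--Tsetlin polytope `GT(λ,μ)`: a GT-pattern, vanishing outside the
triangle, with top row `λ` and `j`-th row sum `μ₁ + ⋯ + μⱼ`. -/
def GTMem (n : ℕ) (lam mu : ℕ → ℤ) (x : ℕ → ℕ → ℝ) : Prop :=
  IsGTPattern n x ∧
  (∀ i j, ¬ IdxP n i j → x i j = 0) ∧
  (∀ i, 1 ≤ i → i ≤ n → x i n = (lam i : ℝ)) ∧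
  (∀ j, 1 ≤ j → j ≤ n → ∑ i ∈ Finset.Icc 1 j, x i j = ∑ t ∈ Finset.Icc 1 j, (mu t : ℝ))

/-- Adjacency of positions in the triangular arrangement: offsets `(±1,±1)` and `(0,±1)`. -/
def Adj (p q : ℕ × ℕ) : Prop :=
  (q.1 = p.1 + 1 ∧ q.2 = p.2 + 1) ∨ (q.1 = p.1 ∧ q.2 = p.2 + 1) ∨
  (p.1 = q.1 + 1 ∧ p.2 = q.2 + 1) ∨ (p.1 = q.1 ∧ p.2 = q.2 + 1)

/-- One step of the tile relation: adjacent valid positions carrying equal entries. -/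
def Step (n : ℕ) (x : ℕ → ℕ → ℝ) (p q : ℕ × ℕ) : Prop :=
  IdxP n p.1 p.2 ∧ IdxP n q.1 q.2 ∧ Adj p q ∧ x p.1 p.2 = x q.1 q.2

/-- Two positions lie in the same tile of the tiling of `x`. -/
def SameTile (n : ℕ) (x : ℕ → ℕ → ℝ) (p q : ℕ × ℕ) : Prop :=
  Relation.ReflTransGen (Step n x) p q

/-- A tile of the tiling of `x`. -/
def IsTile (n : ℕ) (x : ℕ → ℕ → ℝ) (T : Set (ℕ × ℕ)) : Prop :=
  ∃ p : ℕ × ℕ, IdxP n p.1 p.2 ∧ T = {q | SameTile n x p q}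

/-- A free tile: a tile meeting neither the bottom entry `(1,1)` nor the top row `(i,n)`. -/
def IsFreeTile (n : ℕ) (x : ℕ → ℕ → ℝ) (T : Set (ℕ × ℕ)) : Prop :=
  IsTile n x T ∧ ((1, 1) : ℕ × ℕ) ∉ T ∧ ∀ i, ((i, n) : ℕ × ℕ) ∉ T

/-- The tiling matrix over `ℤ`. -/
noncomputable def tileMatZ (n s : ℕ) (P : Fin s → Set (ℕ × ℕ)) :
    Matrix (Fin (n - 2)) (Fin s) ℤ :=
  fun j k => ({i : ℕ | (i, j.1 + 2) ∈ P k}.ncard : ℤ)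

open Classical in
lemma adj_symm {p q : ℕ × ℕ} (h : Adj p q) : Adj q p := by
  unfold Adj at *; tauto

lemma step_symm {n : ℕ} {x : ℕ → ℕ → ℝ} {p q : ℕ × ℕ} (h : Step n x p q) : Step n x q p :=
  ⟨h.2.1, h.1, adj_symm h.2.2.1, h.2.2.2.symm⟩

lemma sameTile_symm {n : ℕ} {x : ℕ → ℕ → ℝ} {p q : ℕ × ℕ} (h : SameTile n x p q) :
    SameTile n x q p :=
  (@Relation.ReflTransGen.symmetric _ _ ⟨fun _ _ hs => step_symm hs⟩).symm _ _ h

lemma sameTile_trans {n : ℕ} {x : ℕ → ℕ → ℝ} {p q r : ℕ × ℕ} (h : SameTile n x p q)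
    (h' : SameTile n x q r) : SameTile n x p r := h.trans h'

lemma sameTile_val {n : ℕ} {x : ℕ → ℕ → ℝ} {p q : ℕ × ℕ} (h : SameTile n x p q) :
    x p.1 p.2 = x q.1 q.2 := by
  induction h with
  | refl => rfl
  | tail _ hstep ih => exact ih.trans hstep.2.2.2

lemma sameTile_valid {n : ℕ} {x : ℕ → ℕ → ℝ} {p q : ℕ × ℕ} (hp : IdxP n p.1 p.2)
    (h : SameTile n x p q) : IdxP n q.1 q.2 := by
  induction h with
  | refl => exact hp
  | tail _ hstep _ => exact hstep.2.1

lemma tile_class {n : ℕ} {x : ℕ → ℕ → ℝ} {T : Set (ℕ × ℕ)} (hT : IsTile n x T)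
    {p : ℕ × ℕ} (hp : p ∈ T) : T = {q | SameTile n x p q} := by
  obtain ⟨c, hc, rfl⟩ := hT
  have hcp : SameTile n x c p := hp
  ext q
  exact ⟨fun h => sameTile_trans (sameTile_symm hcp) h, fun h => sameTile_trans hcp h⟩

lemma tile_valid {n : ℕ} {x : ℕ → ℕ → ℝ} {T : Set (ℕ × ℕ)} (hT : IsTile n x T)
    {p : ℕ × ℕ} (hp : p ∈ T) : IdxP n p.1 p.2 := by
  obtain ⟨c, hc, rfl⟩ := hT
  exact sameTile_valid hc hp

lemma tile_const {n : ℕ} {x : ℕ → ℕ → ℝ} {T : Set (ℕ × ℕ)} (hT : IsTile n x T)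
    {p q : ℕ × ℕ} (hp : p ∈ T) (hq : q ∈ T) : x p.1 p.2 = x q.1 q.2 := by
  obtain ⟨c, hc, rfl⟩ := hT
  exact (sameTile_val hp).symm.trans (sameTile_val hq)

lemma tile_eq_of_mem {n : ℕ} {x : ℕ → ℕ → ℝ} {T T' : Set (ℕ × ℕ)} (hT : IsTile n x T)
    (hT' : IsTile n x T') {p : ℕ × ℕ} (hp : p ∈ T) (hp' : p ∈ T') : T = T' :=
  (tile_class hT hp).trans (tile_class hT' hp').symm

lemma tile_step_closed {n : ℕ} {x : ℕ → ℕ → ℝ} {T : Set (ℕ × ℕ)} (hT : IsTile n x T)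
    {p q : ℕ × ℕ} (hp : p ∈ T) (hstep : Step n x p q) : q ∈ T := by
  obtain ⟨c, hc, rfl⟩ := hT
  exact Relation.ReflTransGen.tail hp hstep
/-- A zero entry is connected within its tile to the top row. -/
lemma zero_chain {n : ℕ} {lam mu : ℕ → ℤ} {x : ℕ → ℕ → ℝ} (hx : GTMem n lam mu x) :
    ∀ d i j, IdxP n i j → n - j = d → x i j = 0 →
      ∃ i', SameTile n x (i, j) (i', n) := by
  intro d
  induction d with
  | zero =>
    intro i j hij hd h0
    have hj : j = n := le_antisymm hij.2.2 (by omega)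
    subst hj; exact ⟨i, Relation.ReflTransGen.refl⟩
  | succ d ih =>
    intro i j hij hd h0
    have hjn : j + 1 ≤ n := by omega
    have h1 : x i j ≥ x (i+1) (j+1) := (hx.1.2 i j hij.1 hij.2.1 hjn).2
    have h2 : 0 ≤ x (i+1) (j+1) := hx.1.1 (i+1) (j+1) ⟨by omega, by omega, hjn⟩
    have h3 : x (i+1) (j+1) = 0 := le_antisymm (by rw [← h0]; exact h1) h2
    have hstep : Step n x (i, j) (i+1, j+1) :=
      ⟨hij, ⟨by omega, by omega, hjn⟩, Or.inl ⟨rfl, rfl⟩, by rw [h0, h3]⟩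
    obtain ⟨i', hi'⟩ := ih (i+1) (j+1) ⟨by omega, by omega, hjn⟩ (by omega) h3
    exact ⟨i', Relation.ReflTransGen.head hstep hi'⟩

/-- Entries of free tiles are strictly positive. -/
lemma freeTile_pos {n : ℕ} {lam mu : ℕ → ℤ} {x : ℕ → ℕ → ℝ} (hx : GTMem n lam mu x)
    {T : Set (ℕ × ℕ)} (hT : IsFreeTile n x T) {p : ℕ × ℕ} (hp : p ∈ T) :
    0 < x p.1 p.2 := by
  have hval := tile_valid hT.1 hp
  rcases lt_or_eq_of_le (hx.1.1 p.1 p.2 hval) with h | h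
  · exact h
  · exfalso
    obtain ⟨i', hi'⟩ := zero_chain hx (n - p.2) p.1 p.2 hval rfl h.symm
    have : (i', n) ∈ T := by
      rw [tile_class hT.1 hp]
      exact hi'
    exact hT.2.2 i' this

/-- The bottom entry equals `μ 1`. -/
lemma bottom_val {n : ℕ} {lam mu : ℕ → ℤ} {x : ℕ → ℕ → ℝ} (hx : GTMem n lam mu x)
    (hn : 1 ≤ n) : x 1 1 = (mu 1 : ℝ) := by
  have := hx.2.2.2 1 le_rfl hn
  simpa using this

/-- Entries not belonging to any free tile are integers. -/
lemma nonfree_int {n s : ℕ} {lam mu : ℕ → ℤ} {x : ℕ → ℕ → ℝ} (hx : GTMem n lam mu x)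
    {P : Fin s → Set (ℕ × ℕ)} (hPall : ∀ T, IsFreeTile n x T → ∃ k, P k = T)
    {i j : ℕ} (hij : IdxP n i j) (hfree : ∀ k, (i, j) ∉ P k) :
    ∃ m : ℤ, x i j = (m : ℝ) := by
  set T : Set (ℕ × ℕ) := {q | SameTile n x (i, j) q} with hTdef
  have hT : IsTile n x T := ⟨(i, j), hij, rfl⟩
  have hmem : (i, j) ∈ T := Relation.ReflTransGen.refl
  by_cases hf : IsFreeTile n x T
  · obtain ⟨k, hk⟩ := hPall T hf
    exact absurd (hk ▸ hmem) (hfree k)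
  · rw [IsFreeTile, not_and_or, not_and_or] at hf
    rcases hf with hf | hf | hf
    · exact absurd hT hf
    · rw [not_not] at hf
      refine ⟨mu 1, ?_⟩
      have h1 := tile_const hT hmem hf
      have h2 : x i j = x 1 1 := by simpa using h1
      rw [h2]
      exact bottom_val hx (le_trans (hij.1.trans hij.2.1) hij.2.2)
    · push_neg at hf
      obtain ⟨i', hi'⟩ := hf
      have hvld := tile_valid hT hi'
      refine ⟨lam i', ?_⟩
      have h1 := tile_const hT hmem hi'
      simp only at h1
      rw [h1]
      exact hx.2.2.1 i' hvld.1 (le_trans hvld.2.1 hvld.2.2)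
open scoped Classical

lemma mem_tile_unique {n s : ℕ} {x : ℕ → ℕ → ℝ} {P : Fin s → Set (ℕ × ℕ)}
    (hPfree : ∀ k, IsFreeTile n x (P k)) (hPinj : Function.Injective P)
    {p : ℕ × ℕ} {k k' : Fin s} (h : p ∈ P k) (h' : p ∈ P k') : k = k' :=
  hPinj (tile_eq_of_mem (hPfree k).1 (hPfree k').1 h h')

lemma ite_sum_eq {s : ℕ} {P : Fin s → Set (ℕ × ℕ)} {p : ℕ × ℕ}
    (huniq : ∀ k k' : Fin s, p ∈ P k → p ∈ P k' → k = k') (f : Fin s → ℝ) {k : Fin s}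
    (hk : p ∈ P k) : (∑ k' : Fin s, if p ∈ P k' then f k' else 0) = f k := by
  rw [Finset.sum_eq_single k]
  · simp [hk]
  · intro k' _ hne
    rw [if_neg (fun hmem => hne (huniq k' k hmem hk))]
  · simp

lemma ite_sum_eq_zero {s : ℕ} {P : Fin s → Set (ℕ × ℕ)} {p : ℕ × ℕ}
    (f : Fin s → ℝ) (hk : ∀ k, p ∉ P k) :
    (∑ k' : Fin s, if p ∈ P k' then f k' else 0) = 0 := by
  rw [Finset.sum_eq_zero]
  intro k _
  rw [if_neg (hk k)]

/-- The tiling matrix entry as a `Finset` cardinality. -/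
lemma tileMat_card {n s : ℕ} {x : ℕ → ℕ → ℝ} {P : Fin s → Set (ℕ × ℕ)}
    (hPfree : ∀ k, IsFreeTile n x (P k)) {j : ℕ} (k : Fin s) :
    {i : ℕ | (i, j) ∈ P k}.ncard
      = ((Finset.Icc 1 j).filter (fun i => (i, j) ∈ P k)).card := by
  rw [← Set.ncard_coe_finset]
  congr 1
  ext i
  simp only [Set.mem_setOf_eq, Finset.coe_filter, Finset.mem_Icc]
  constructor
  · intro h
    have := tile_valid (hPfree k).1 h
    exact ⟨⟨this.1, this.2.1⟩, h⟩
  · tauto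

/-- Summing the tile indicator over a row gives the tiling-matrix counts. -/
lemma row_indicator_sum {n s : ℕ} {x : ℕ → ℕ → ℝ} {P : Fin s → Set (ℕ × ℕ)}
    (hPfree : ∀ k, IsFreeTile n x (P k)) (j : ℕ) (f : Fin s → ℝ) :
    ∑ i ∈ Finset.Icc 1 j, (∑ k : Fin s, if (i, j) ∈ P k then f k else 0)
      = ∑ k : Fin s, ({i : ℕ | (i, j) ∈ P k}.ncard : ℝ) * f k := by
  rw [Finset.sum_comm]
  refine Finset.sum_congr rfl fun k _ => ?_
  rw [tileMat_card hPfree k, Finset.sum_ite, Finset.sum_const, Finset.sum_const]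
  simp [nsmul_eq_mul]
/-- Row identity: on each middle row the weighted tile counts sum to an integer. -/
lemma row_identity {n s : ℕ} {lam mu : ℕ → ℤ} {x : ℕ → ℕ → ℝ} (hx : GTMem n lam mu x)
    {P : Fin s → Set (ℕ × ℕ)}
    (hPfree : ∀ k, IsFreeTile n x (P k)) (hPinj : Function.Injective P)
    (hPall : ∀ T, IsFreeTile n x T → ∃ k, P k = T)
    {w : Fin s → ℝ} (hw : ∀ k, ∀ p ∈ P k, x p.1 p.2 = w k) (jidx : Fin (n - 2)) :
    ∃ m : ℤ, ∑ k : Fin s, ((tileMatZ n s P jidx k : ℤ) : ℝ) * w k = (m : ℝ) := by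
  set jr := jidx.1 + 2 with hjr
  have hjlt : jidx.1 < n - 2 := jidx.2
  have hjn : jr ≤ n := by omega
  have hrs := hx.2.2.2 jr (by omega) hjn
  set g : ℕ → ℝ := fun i => if 1 ≤ i ∧ i ≤ jr then
      (if ∃ k, (i, jr) ∈ P k then 0 else x i jr) else 0 with hg
  have hgint : ∀ i : ℕ, ∃ mi : ℤ, g i = (mi : ℝ) := by
    intro i
    by_cases hi : 1 ≤ i ∧ i ≤ jr
    · by_cases hex : ∃ k, (i, jr) ∈ P k
      · exact ⟨0, by simp [hg, hi, hex]⟩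
      · push_neg at hex
        obtain ⟨m, hm⟩ := nonfree_int hx hPall ⟨hi.1, hi.2, hjn⟩ hex
        exact ⟨m, by simp [hg, hi, hex, hm]⟩
    · exact ⟨0, by simp [hg, hi]⟩
  choose F hF using hgint
  have hsplit : ∀ i ∈ Finset.Icc 1 jr,
      x i jr = (∑ k : Fin s, if (i, jr) ∈ P k then w k else 0) + g i := by
    intro i hi
    rw [Finset.mem_Icc] at hi
    by_cases hex : ∃ k, (i, jr) ∈ P k
    · obtain ⟨k, hk⟩ := hex
      rw [ite_sum_eq (fun k k' => mem_tile_unique hPfree hPinj) w hk]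
      have hex' : ∃ k, (i, jr) ∈ P k := ⟨k, hk⟩
      have : g i = 0 := by simp [hg, hi, hex']
      rw [this, add_zero]
      exact hw k _ hk
    · push_neg at hex
      rw [ite_sum_eq_zero w hex, zero_add]
      simp [hg, hi, fun k => hex k]
  have hsum : ∑ i ∈ Finset.Icc 1 jr, x i jr
      = (∑ k : Fin s, ({i : ℕ | (i, jr) ∈ P k}.ncard : ℝ) * w k)
        + ∑ i ∈ Finset.Icc 1 jr, g i := by
    rw [Finset.sum_congr rfl hsplit, Finset.sum_add_distrib,
      row_indicator_sum hPfree jr w]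
  refine ⟨(∑ t ∈ Finset.Icc 1 jr, mu t) - ∑ i ∈ Finset.Icc 1 jr, F i, ?_⟩
  have h1 : ∑ i ∈ Finset.Icc 1 jr, g i = ((∑ i ∈ Finset.Icc 1 jr, F i : ℤ) : ℝ) := by
    push_cast
    exact Finset.sum_congr rfl fun i _ => hF i
  have h2 : (∑ k : Fin s, ({i : ℕ | (i, jr) ∈ P k}.ncard : ℝ) * w k)
      = ∑ k : Fin s, ((tileMatZ n s P jidx k : ℤ) : ℝ) * w k := by
    refine Finset.sum_congr rfl fun k _ => ?_
    simp [tileMatZ, hjr]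
  rw [h2, h1, hrs] at hsum
  push_cast
  push_cast at hsum
  linarith
/-- The linear map given by the tiling matrix (over `ℝ`) has trivial kernel at a vertex. -/
lemma kernel_zero {n s : ℕ} {lam mu : ℕ → ℤ} {x : ℕ → ℕ → ℝ} (hx : GTMem n lam mu x)
    (hvert : x ∈ Set.extremePoints ℝ {y | GTMem n lam mu y})
    {P : Fin s → Set (ℕ × ℕ)}
    (hPfree : ∀ k, IsFreeTile n x (P k)) (hPinj : Function.Injective P)
    (v : Fin s → ℝ)
    (hv : ∀ jidx : Fin (n - 2), ∑ k : Fin s, ((tileMatZ n s P jidx k : ℤ) : ℝ) * v k = 0) :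
    v = 0 := by
  by_contra hne
  obtain ⟨ks, hks⟩ := Function.ne_iff.1 hne
  -- the perturbation direction
  set u : ℕ → ℕ → ℝ := fun i j => ∑ k : Fin s, if (i, j) ∈ P k then v k else 0 with hu
  have hu_mem : ∀ i j k, (i, j) ∈ P k → u i j = v k := fun i j k hk =>
    ite_sum_eq (fun k k' => mem_tile_unique hPfree hPinj) v hk
  have hu_zero : ∀ i j, (∀ k, (i, j) ∉ P k) → u i j = 0 := fun i j h =>
    ite_sum_eq_zero v h
  have hu_invalid : ∀ i j, ¬ IdxP n i j → u i j = 0 := by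
    intro i j h
    exact hu_zero i j fun k hk => h (tile_valid (hPfree k).1 hk)
  have hu_top : ∀ i, u i n = 0 := fun i => hu_zero i n fun k hk => (hPfree k).2.2 i hk
  have hu_bot : u 1 1 = 0 := hu_zero 1 1 fun k hk => (hPfree k).2.1 hk
  have hu_step : ∀ p q : ℕ × ℕ, Step n x p q → u p.1 p.2 = u q.1 q.2 := by
    intro p q hs
    refine Finset.sum_congr rfl fun k _ => ?_
    have hiff : p ∈ P k ↔ q ∈ P k :=
      ⟨fun h => tile_step_closed (hPfree k).1 h hs,
       fun h => tile_step_closed (hPfree k).1 h (step_symm hs)⟩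
    by_cases hpk : p ∈ P k
    · rw [if_pos hpk, if_pos (hiff.1 hpk)]
    · rw [if_neg hpk, if_neg (fun h => hpk (hiff.2 h))]
  set B1 : ℝ := ∑ k : Fin s, |v k| with hB1
  have hB1nn : 0 ≤ B1 := Finset.sum_nonneg fun k _ => abs_nonneg _
  have hu_bdd : ∀ i j, |u i j| ≤ B1 := by
    intro i j
    calc |u i j| ≤ ∑ k : Fin s, |if (i, j) ∈ P k then v k else 0| :=
          Finset.abs_sum_le_sum_abs _ _
    _ ≤ B1 := Finset.sum_le_sum fun k _ => by split <;> simp [abs_nonneg]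
  set B : ℝ := B1 + 1 with hB
  have hBpos : 0 < B := by positivity
  -- the slack set
  set F2 : Finset (ℕ × ℕ) := Finset.Icc 1 n ×ˢ Finset.Icc 1 n with hF2
  set G0 : Finset ℝ := F2.image (fun p => x p.1 p.2)
      ∪ F2.image (fun p => x p.1 (p.2 + 1) - x p.1 p.2)
      ∪ F2.image (fun p => x p.1 p.2 - x (p.1 + 1) (p.2 + 1)) with hG0
  set G : Finset ℝ := insert (1 : ℝ) (G0.filter (fun a => 0 < a)) with hG
  have hGne : G.Nonempty := ⟨1, Finset.mem_insert_self _ _⟩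
  have hGpos : ∀ a ∈ G, 0 < a := by
    intro a ha
    rcases Finset.mem_insert.1 ha with h | h
    · rw [h]; norm_num
    · exact (Finset.mem_filter.1 h).2
  set m : ℝ := G.min' hGne with hm
  have hmpos : 0 < m := hGpos _ (G.min'_mem hGne)
  have hmle : ∀ a ∈ G, m ≤ a := fun a ha => Finset.min'_le _ _ ha
  set ε : ℝ := m / (2 * B) with he
  have hεpos : 0 < ε := by positivity
  have hεB : ε * (2 * B) = m := div_mul_cancel₀ _ (by positivity)
  -- feasibility of perturbations
  have hfeas : ∀ t : ℝ, |t| ≤ ε → GTMem n lam mu (fun i j => x i j + t * u i j) := by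
    intro t ht
    have htB : ∀ a b : ℝ, |a| ≤ B1 → |b| ≤ B1 → |t * (a - b)| ≤ m := by
      intro a b ha hb
      calc |t * (a - b)| = |t| * |a - b| := abs_mul _ _
      _ ≤ ε * (2 * B) := by
          apply mul_le_mul ht _ (abs_nonneg _) hεpos.le
          calc |a - b| ≤ |a| + |b| := abs_sub _ _
          _ ≤ 2 * B := by simp [hB]; linarith
      _ = m := hεB
    have hiq : ∀ p q : ℕ × ℕ, IdxP n p.1 p.2 → IdxP n q.1 q.2 → Adj p q →
        x p.1 p.2 ≤ x q.1 q.2 → (x q.1 q.2 - x p.1 p.2 ∈ G0) →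
        x p.1 p.2 + t * u p.1 p.2 ≤ x q.1 q.2 + t * u q.1 q.2 := by
      intro p q hp hq hadj hle hmemG
      rcases eq_or_lt_of_le hle with heq | hlt
      · rw [hu_step p q ⟨hp, hq, hadj, heq⟩, heq]
      · have hGmem : x q.1 q.2 - x p.1 p.2 ∈ G := by
          rw [hG]
          exact Finset.mem_insert_of_mem (Finset.mem_filter.2 ⟨hmemG, by linarith⟩)
        have h1 := hmle _ hGmem
        have h2 := htB (u p.1 p.2) (u q.1 q.2) (hu_bdd _ _) (hu_bdd _ _)
        have h3 : t * (u p.1 p.2 - u q.1 q.2) ≤ |t * (u p.1 p.2 - u q.1 q.2)| := le_abs_self _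
        nlinarith
    refine ⟨⟨?_, ?_⟩, ?_, ?_, ?_⟩
    · -- nonnegativity
      intro i j hij
      show 0 ≤ x i j + t * u i j
      by_cases hz : u i j = 0
      · simpa [hz] using hx.1.1 i j hij
      · have hex : ∃ k, (i, j) ∈ P k := by
          by_contra hc
          push_neg at hc
          exact hz (hu_zero i j hc)
        obtain ⟨k, hk⟩ := hex
        have hpos : 0 < x i j := freeTile_pos hx (hPfree k) hk
        have hGmem : x i j ∈ G := by
          rw [hG]
          refine Finset.mem_insert_of_mem (Finset.mem_filter.2 ⟨?_, hpos⟩)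
          rw [hG0]
          refine Finset.mem_union_left _ (Finset.mem_union_left _ ?_)
          refine Finset.mem_image.2 ⟨(i, j), ?_, rfl⟩
          simp [hF2, Finset.mem_Icc]
          omega
        have h1 := hmle _ hGmem
        have h2 : |t * u i j| ≤ m := by
          calc |t * u i j| = |t * (u i j - 0)| := by ring_nf
          _ ≤ m := htB _ _ (hu_bdd _ _) (by simpa using hB1nn)
        obtain ⟨hlo, hhi⟩ := abs_le.mp h2
        linarith
    · -- interlacing
      intro i j hi hij hjn
      constructor
      · refine hiq (i, j) (i, (j+1)) ⟨hi, hij, by omega⟩ ⟨hi, by omega, hjn⟩ ?_ ?_ ?_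
        · exact Or.inr (Or.inl ⟨rfl, rfl⟩)
        · exact (hx.1.2 i j hi hij hjn).1
        · rw [hG0]
          refine Finset.mem_union_left _ (Finset.mem_union_right _ ?_)
          refine Finset.mem_image.2 ⟨(i, j), ?_, rfl⟩
          simp [hF2, Finset.mem_Icc]
          omega
      · refine hiq ((i+1), (j+1)) (i, j) ⟨by omega, by omega, hjn⟩ ⟨hi, hij, by omega⟩ ?_ ?_ ?_
        · exact Or.inr (Or.inr (Or.inl ⟨rfl, rfl⟩))
        · exact (hx.1.2 i j hi hij hjn).2
        · rw [hG0]
          refine Finset.mem_union_right _ ?_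
          refine Finset.mem_image.2 ⟨(i, j), ?_, rfl⟩
          simp [hF2, Finset.mem_Icc]
          omega
    · -- vanishing outside
      intro i j hij
      show x i j + t * u i j = 0
      rw [hx.2.1 i j hij, hu_invalid i j hij]
      ring
    · -- top row
      intro i hi hin
      show x i n + t * u i n = (lam i : ℝ)
      rw [hu_top i, hx.2.2.1 i hi hin]
      ring
    · -- row sums
      intro j hj hjn
      show ∑ i ∈ Finset.Icc 1 j, (x i j + t * u i j) = ∑ r ∈ Finset.Icc 1 j, ((mu r : ℤ) : ℝ)
      have husum : ∑ i ∈ Finset.Icc 1 j, u i j = 0 := by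
        rcases eq_or_lt_of_le hjn with hA | hA
        · exact Finset.sum_eq_zero fun i _ => by rw [hA]; exact hu_top i
        · rcases eq_or_lt_of_le hj with hB' | hB'
          · rw [← hB', Finset.Icc_self, Finset.sum_singleton]
            exact hu_bot
          · have h2j : 2 ≤ j := hB'
            have hjn2 : j - 2 < n - 2 := by omega
            have hrw : j - 2 + 2 = j := by omega
            have := hv ⟨j - 2, hjn2⟩
            rw [hu]
            simp only
            rw [row_indicator_sum hPfree j v]
            rw [← this]
            refine Finset.sum_congr rfl fun k _ => ?_
            simp [tileMatZ, hrw]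
      rw [Finset.sum_add_distrib, ← Finset.mul_sum, husum, mul_zero, add_zero]
      exact hx.2.2.2 j hj hjn
  -- contradiction with extremality
  set x1 : ℕ → ℕ → ℝ := fun i j => x i j + ε * u i j with hx1
  set x2 : ℕ → ℕ → ℝ := fun i j => x i j + (-ε) * u i j with hx2
  have hm1 : x1 ∈ {y | GTMem n lam mu y} := hfeas ε (le_of_eq (abs_of_pos hεpos))
  have hm2 : x2 ∈ {y | GTMem n lam mu y} := by
    refine hfeas (-ε) ?_
    rw [abs_neg]
    exact le_of_eq (abs_of_pos hεpos)
  have hseg : x ∈ openSegment ℝ x1 x2 := by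
    refine ⟨1/2, 1/2, by norm_num, by norm_num, by norm_num, ?_⟩
    funext i; funext j
    simp [hx1, hx2]
    ring
  have := (hvert.2 hm1 hm2 hseg)
  obtain ⟨c, hc, hclass⟩ := (hPfree ks).1
  have hcmem : c ∈ P ks := by rw [hclass]; exact Relation.ReflTransGen.refl
  have := congrFun (congrFun this c.1) c.2
  rw [hx1] at this
  simp only [hu_mem c.1 c.2 ks (by simpa using hcmem)] at this
  have : ε * v ks = 0 := by linarith [this]
  rcases mul_eq_zero.1 this with h | h
  · exact absurd h (ne_of_gt hεpos)
  · exact hks (by simpa using h)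
open Matrix in
/-- An integer matrix with trivial rational kernel has an invertible `s × s` submatrix. -/
lemma exists_good_submatrix {m s : ℕ} (B : Matrix (Fin m) (Fin s) ℤ)
    (hker : ∀ v : Fin s → ℚ, (∀ j : Fin m, ∑ k : Fin s, (B j k : ℚ) * v k = 0) → v = 0) :
    ∃ rows : Fin s → Fin m, Function.Injective rows ∧ (B.submatrix rows id).det ≠ 0 := by
  set Bq : Matrix (Fin m) (Fin s) ℚ := B.map (Int.cast) with hBq
  have hinj : Function.Injective Bq.mulVecLin := by
    rw [← LinearMap.ker_eq_bot, LinearMap.ker_eq_bot']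
    intro v hv
    refine hker v fun j => ?_
    have := congrFun hv j
    simpa [Matrix.mulVecLin, Matrix.mulVec, dotProduct, hBq, mul_comm] using this
  have hrank : Bq.rank = s := by
    rw [Matrix.rank, LinearMap.finrank_range_of_inj hinj, Module.finrank_fin_fun]
  have hrankT : Bqᵀ.rank = s := by rw [Matrix.rank_transpose]; exact hrank
  have hspan : Submodule.span ℚ (Set.range (fun j : Fin m => Bq j)) = ⊤ := by
    have h1 : LinearMap.range Bq.vecMulLinear
        = Submodule.span ℚ (Set.range (fun j : Fin m => Bq j)) :=
      range_vecMulLinear Bq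
    have h2 : Module.finrank ℚ (LinearMap.range Bq.vecMulLinear) = s := by
      rw [← Matrix.mulVecLin_transpose]
      exact hrankT
    apply Submodule.eq_top_of_finrank_eq
    rw [← h1, h2, Module.finrank_fin_fun]
  obtain ⟨b, hb_sub, hb_span, hb_li⟩ :=
    exists_linearIndependent ℚ (Set.range (fun j : Fin m => Bq j))
  rw [hspan] at hb_span
  have hb_fin : b.Finite := (Set.finite_range _).subset hb_sub
  haveI : Fintype b := hb_fin.fintype
  let bas : Module.Basis b ℚ (Fin s → ℚ) := Module.Basis.mk hb_li
    (by rw [Subtype.range_coe]; exact hb_span.ge)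
  have hcard : Fintype.card b = s := by
    have := Module.finrank_eq_card_basis bas
    rw [Module.finrank_fin_fun] at this
    omega
  let e : Fin s ≃ b := (Fintype.equivFinOfCardEq hcard).symm
  have hchoice : ∀ a : Fin s, ∃ j : Fin m, Bq j = (e a : Fin s → ℚ) := fun a =>
    hb_sub (e a).2
  choose rows hrows using hchoice
  have hrow_inj : Function.Injective rows := by
    intro a a' h
    have : (e a : Fin s → ℚ) = (e a' : Fin s → ℚ) := by rw [← hrows a, ← hrows a', h]
    exact e.injective (Subtype.ext this)
  refine ⟨rows, hrow_inj, ?_⟩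
  have hli : LinearIndependent ℚ (fun a : Fin s => (Bq.submatrix rows id) a) := by
    have : (fun a : Fin s => (Bq.submatrix rows id) a)
        = (fun y : b => (y : Fin s → ℚ)) ∘ e := by
      funext a
      show Bq (rows a) = _
      rw [hrows a]
      rfl
    rw [this]
    exact hb_li.comp e e.injective
  have hunit : IsUnit (Bq.submatrix rows id) :=
    Matrix.linearIndependent_rows_iff_isUnit.mp hli
  have hdetq : (Bq.submatrix rows id).det ≠ 0 :=
    (Matrix.isUnit_iff_isUnit_det _).mp hunit |>.ne_zero
  intro hc
  apply hdetq
  have : (Bq.submatrix rows id) = (Int.castRingHom ℚ).mapMatrix (B.submatrix rows id) := rfl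
  rw [this, ← RingHom.map_det, hc]
  simp
open Matrix in
/-- Cramer-style divisibility: if an integer square matrix maps a real vector to integers and
one coordinate of the vector is a rational with denominator `q`, then `q ∣ det`. -/
lemma den_dvd_det {s q : ℕ} (N : Matrix (Fin s) (Fin s) ℤ) (w : Fin s → ℝ) (mrow : Fin s → ℤ)
    (hrow : ∀ a : Fin s, ∑ k : Fin s, ((N a k : ℤ) : ℝ) * w k = (mrow a : ℝ))
    (k0 : Fin s) (r : ℚ) (hw : w k0 = (r : ℝ)) (hden : r.den = q) :
    (q : ℤ) ∣ N.det := by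
  classical
  set Z : ℤ := ∑ a : Fin s, N.adjugate k0 a * mrow a with hZ
  have hid : (N.det : ℝ) * w k0 = (Z : ℝ) := by
    have hcalc : (Z : ℝ) = ∑ a : Fin s, (N.adjugate k0 a : ℝ) * ∑ k : Fin s, (N a k : ℝ) * w k := by
      rw [hZ]
      push_cast
      refine Finset.sum_congr rfl fun a _ => ?_
      rw [hrow a]
    rw [hcalc]
    simp_rw [Finset.mul_sum, ← mul_assoc]
    rw [Finset.sum_comm]
    have : ∀ k : Fin s, ∑ a : Fin s, (N.adjugate k0 a : ℝ) * (N a k : ℝ) * w k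
        = (((N.adjugate * N) k0 k : ℤ) : ℝ) * w k := by
      intro k
      rw [Matrix.mul_apply]
      push_cast
      rw [Finset.sum_mul]
    simp_rw [this, Matrix.adjugate_mul]
    rw [Finset.sum_eq_single k0]
    · simp [Matrix.smul_apply, Matrix.one_apply]
    · intro b _ hb
      simp [Matrix.smul_apply, Matrix.one_apply, Ne.symm hb]
    · simp
  rw [hw] at hid
  have hidq : (N.det : ℚ) * r = (Z : ℚ) := by
    have : (((N.det : ℚ) * r : ℚ) : ℝ) = (((Z : ℚ) : ℚ) : ℝ) := by rw [Rat.cast_mul, Rat.cast_intCast, Rat.cast_intCast]; linarith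
    exact_mod_cast this
  -- cross-multiply
  have hcross : N.det * r.num = Z * (r.den : ℤ) := by
    have h1 : ((N.det * r.num : ℤ) : ℚ) = ((Z * (r.den : ℤ) : ℤ) : ℚ) := by
      rw [Int.cast_mul, Int.cast_mul, Int.cast_natCast]
      rw [← Rat.num_div_den r] at hidq
      field_simp at hidq
      linarith [hidq]
    exact_mod_cast h1
  have hdvd : (q : ℤ) ∣ N.det * r.num := by
    rw [hcross, ← hden]
    exact Dvd.intro Z (by ring)
  have hcop : IsCoprime (q : ℤ) r.num := by
    rw [Int.isCoprime_iff_gcd_eq_one]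
    have := r.reduced
    rw [hden] at this
    simpa [Int.gcd, Nat.coprime_comm] using this.symm
  exact hcop.dvd_of_dvd_mul_right hdvd
/-- If `x` is a vertex of `GT(λ,μ)` and `q > 1` is a reduced denominator of some entry of `x`,
then every `s × s` submatrix of the tiling matrix has determinant divisible by `q`; since some
`s × s` submatrix has nonzero determinant, `q` is bounded by its absolute value. -/
theorem stmt17 (n s q : ℕ) (hq : 1 < q) (lam mu : ℕ → ℤ) (x : ℕ → ℕ → ℝ)
    (hx : GTMem n lam mu x)
    (hvert : x ∈ Set.extremePoints ℝ {y | GTMem n lam mu y})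
    (P : Fin s → Set (ℕ × ℕ))
    (hPfree : ∀ k, IsFreeTile n x (P k)) (hPinj : Function.Injective P)
    (hPall : ∀ T, IsFreeTile n x T → ∃ k, P k = T)
    (hden : ∃ (i j : ℕ) (r : ℚ), IdxP n i j ∧ x i j = (r : ℝ) ∧ r.den = q) :
    (∀ rows : Fin s → Fin (n - 2), Function.Injective rows →
      (q : ℤ) ∣ ((tileMatZ n s P).submatrix rows id).det) ∧
    (∃ rows : Fin s → Fin (n - 2), Function.Injective rows ∧
      ((tileMatZ n s P).submatrix rows id).det ≠ 0 ∧
      (q : ℤ) ≤ |((tileMatZ n s P).submatrix rows id).det|) := by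
  classical
  -- basepoints and tile values
  choose c hcvalid hcclass using fun k => (hPfree k).1
  set w : Fin s → ℝ := fun k => x (c k).1 (c k).2 with hwdef
  have hcmem : ∀ k, c k ∈ P k := fun k => by
    rw [hcclass k]; exact Relation.ReflTransGen.refl
  have hw : ∀ k, ∀ p ∈ P k, x p.1 p.2 = w k := fun k p hp =>
    tile_const (hPfree k).1 hp (hcmem k)
  -- the fractional entry lies in a free tile
  obtain ⟨i, j, r, hij, hxij, hrden⟩ := hden
  have hk0 : ∃ k0, (i, j) ∈ P k0 := by
    by_contra hc
    push_neg at hc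
    obtain ⟨m, hm⟩ := nonfree_int hx hPall hij hc
    have hrm : r = (m : ℚ) := by exact_mod_cast hxij.symm.trans hm
    rw [hrm] at hrden
    simp at hrden
    omega
  obtain ⟨k0, hk0⟩ := hk0
  have hwk0 : w k0 = (r : ℝ) := (hw k0 (i, j) hk0).symm.trans hxij
  -- row identities
  choose mj hmj using fun jidx => row_identity hx hPfree hPinj hPall hw jidx
  -- divisibility for all injective row selections
  have hdvd : ∀ rows : Fin s → Fin (n - 2), Function.Injective rows →
      (q : ℤ) ∣ ((tileMatZ n s P).submatrix rows id).det := by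
    intro rows hrinj
    exact den_dvd_det _ w (fun a => mj (rows a)) (fun a => hmj (rows a)) k0 r hwk0 hrden
  refine ⟨hdvd, ?_⟩
  -- the rational kernel is trivial
  have hkerQ : ∀ v : Fin s → ℚ,
      (∀ jidx : Fin (n - 2), ∑ k : Fin s, ((tileMatZ n s P jidx k : ℤ) : ℚ) * v k = 0) →
      v = 0 := by
    intro v hv
    have hreal : (fun k => ((v k : ℚ) : ℝ)) = 0 := by
      apply kernel_zero hx hvert hPfree hPinj
      intro jidx
      exact_mod_cast hv jidx
    funext k
    have h := congrFun hreal k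
    simp only [Pi.zero_apply] at h ⊢
    exact_mod_cast h
  obtain ⟨rows, hrinj, hdet⟩ := exists_good_submatrix (tileMatZ n s P) hkerQ
  exact ⟨rows, hrinj, hdet,
    Int.le_of_dvd (abs_pos.mpr hdet) ((dvd_abs _ _).mpr (hdvd rows hrinj))⟩
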